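/- arXiv:2303.10216 — 4 statements merged into one kernel-verified Lean document; each statement's English description precedes it below -/
import Mathlib

section
/- Let X be a random vector in ℝ^n with distribution P_X, N = {1,…,n}, and let h be a linear game value with coefficients w_i(S,N), i.e. h_i[N,v] = Σ_{S⊆N∖{i}} w_i(S,N)(v(S∪{i}) − v(S)). If f belongs to (an equivalence class in) L^1(P̃_X), then for P_X-almost every x* ∈ ℝ^n the marginal game v^{ME}(S; x*, X, f) = E[f(x*_S, X_{-S})] is well-defined (finite) for every S ⊆ N, and hence the marginal game value h_i[N, v^{ME}(·; x*, X, f)] is well-defined for every i ∈ N. -/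
open MeasureTheory ProbabilityTheory ENNReal Filter Finset

noncomputable section

/-- Discrete σ-algebra on the (finite) space of coalitions. -/
instance {k : ℕ} : MeasurableSpace (Finset (Fin k)) := ⊤

/-- `merge n S y x` is the vector in `ℝ^n` agreeing with `y` on `S` and with `x` on `N∖S`,
i.e. the vector `(y_S, x_{-S})`. -/
def merge (n : ℕ) (S : Finset (Fin n)) (y x : Fin n → ℝ) : Fin n → ℝ :=
  fun i => if i ∈ S then y i else x i

/-- The product measure `P_{X_S} ⊗ P_{X_{-S}}` viewed as a measure on `ℝ^n`
(obtained by merging two independent copies along `S`). -/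
def prodPart (n : ℕ) (P : Measure (Fin n → ℝ)) (S : Finset (Fin n)) :
    Measure (Fin n → ℝ) :=
  (P.prod P).map (fun q => merge n S q.1 q.2)

/-- The mixture measure `P̃_X = 2^{-n} ∑_{S ⊆ N} P_{X_S} ⊗ P_{X_{-S}}` on `ℝ^n`. -/
def tildeP (n : ℕ) (P : Measure (Fin n → ℝ)) : Measure (Fin n → ℝ) :=
  ((2 : ℝ≥0∞) ^ n)⁻¹ • ∑ S : Finset (Fin n), prodPart n P S

/-- The marginal game `v^{ME}(S; x*, X, f) = E[f(x*_S, X_{-S})]`. -/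
def vME (n : ℕ) (P : Measure (Fin n → ℝ)) (f : (Fin n → ℝ) → ℝ)
    (xs : Fin n → ℝ) (S : Finset (Fin n)) : ℝ :=
  ∫ x, f (merge n S xs x) ∂P

/-- A linear game value `h_i[N,v] = ∑_{S ⊆ N∖{i}} w(S) (v(S∪{i}) - v(S))`. -/
def gameValue (n : ℕ) (w : Finset (Fin n) → ℝ) (i : Fin n)
    (v : Finset (Fin n) → ℝ) : ℝ :=
  ∑ S ∈ (univ.erase i).powerset, w S * (v (insert i S) - v S)

/-- The discrete measure on subsets of `D` assigning mass `w T` to each `T ⊆ D`.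
For `D = N∖{i}` and nonnegative weights summing to one this is `P_i^{(h)}`. -/
def subsetMeasure (k : ℕ) (D : Finset (Fin k)) (w : Finset (Fin k) → ℝ) :
    Measure (Finset (Fin k)) :=
  ∑ T ∈ D.powerset, (ENNReal.ofReal (w T)) • Measure.dirac T

/-- `Δ_i(S, x; x*, f) = f(x*_{S∪{i}}, x_{-(S∪{i})}) - f(x*_S, x_{-S})`. -/
def deltaFun (n : ℕ) (f : (Fin n → ℝ) → ℝ) (i : Fin n) (xs : Fin n → ℝ) :
    Finset (Fin n) × (Fin n → ℝ) → ℝ :=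
  fun q => f (merge n (insert i q.1) xs q.2) - f (merge n q.1 xs q.2)

/-- Well-definedness of the marginal game and marginal game values.
If `f ∈ L^1(P̃_X)`, then for `P_X`-almost every `x*` the marginal game
`v^{ME}(S; x*, X, f) = E[f(x*_S, X_{-S})]` is well-defined (the integrand is integrable)
for every `S ⊆ N`, and hence the linear game value
`h_i[N, v^{ME}(·; x*, X, f)] = ∑_{S ⊆ N∖{i}} w_i(S,N)(v^{ME}(S∪{i}) - v^{ME}(S))`
is well-defined for every `i ∈ N`. -/
theorem stmt1 (n : ℕ) (P : Measure (Fin n → ℝ)) [IsProbabilityMeasure P]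
    (f : (Fin n → ℝ) → ℝ) (hf : MemLp f 1 (tildeP n P))
    (w : Fin n → Finset (Fin n) → ℝ) :
    ∀ᵐ xs ∂P,
      (∀ S : Finset (Fin n), Integrable (fun x => f (merge n S xs x)) P) ∧
      (∀ i : Fin n, gameValue n (w i) i (vME n P f xs) =
        ∑ S ∈ (univ.erase i).powerset,
          w i S * ((∫ x, f (merge n (insert i S) xs x) ∂P) -
                   ∫ x, f (merge n S xs x) ∂P)) := by
  have hmerge : ∀ S : Finset (Fin n), Measurable (fun q : (Fin n → ℝ) × (Fin n → ℝ) => merge n S q.1 q.2) := by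
    intro S
    apply measurable_pi_lambda
    intro i
    by_cases h : i ∈ S <;> simp [merge, h] <;> fun_prop
  have hle : ∀ S : Finset (Fin n), prodPart n P S ≤ ((2 : ℝ≥0∞) ^ n) • tildeP n P := by
    intro S
    have h1 : prodPart n P S ≤ ∑ T : Finset (Fin n), prodPart n P T := by
      refine Measure.le_iff.mpr fun t ht => ?_
      rw [Measure.finset_sum_apply]
      exact Finset.single_le_sum (f := fun T => prodPart n P T t) (fun T _ => zero_le) (Finset.mem_univ S)
    have h2 : ((2 : ℝ≥0∞) ^ n) • tildeP n P = ∑ T : Finset (Fin n), prodPart n P T := by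
      rw [tildeP, smul_smul, ENNReal.mul_inv_cancel (pow_ne_zero _ two_ne_zero) (ENNReal.pow_ne_top ENNReal.ofNat_ne_top), one_smul]
    rw [h2]; exact h1
  have hint : Integrable f (tildeP n P) := memLp_one_iff_integrable.mp hf
  have hintS : ∀ S : Finset (Fin n), Integrable f (prodPart n P S) := fun S =>
    ((hint.smul_measure (ENNReal.pow_ne_top ENNReal.ofNat_ne_top)).mono_measure (hle S))
  have hae : ∀ S : Finset (Fin n), ∀ᵐ xs ∂P, Integrable (fun x => f (merge n S xs x)) P := by
    intro S
    have h1 : Integrable (fun q : (Fin n → ℝ) × (Fin n → ℝ) => f (merge n S q.1 q.2)) (P.prod P) := by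
      simp only [prodPart] at hintS
      exact (integrable_map_measure (hintS S).1 (hmerge S).aemeasurable).mp (hintS S)
    exact h1.prod_right_ae
  filter_upwards [ae_all_iff.mpr hae] with xs h
  exact ⟨h, fun i => rfl⟩
end
end

section
/- Let f belong to (an equivalence class in) L^2(P̃_X), let h be a linear game value with coefficients w_i(S,N), and let D = {X^(1),…,X^(K)} be K independent random samples from P_X. Then for P_X-almost every x* ∈ ℝ^n and every i ∈ N, E[ |h_i[N, v^{ME}(·; x*, X, f)] − h_i[N, v̂^{ME}(·; x*, D, f)]|² ] ≤ (2/K) · ( Σ_{S⊆N∖{i}} w_i(S,N)² ) · ( Σ_{S⊆N} Var(f(x*_S, X_{-S})) ) < ∞. -/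
open MeasureTheory ProbabilityTheory ENNReal Filter Finset

noncomputable section

/- ### Auxiliary lemmas -/

lemma measurable_mergePair (n : ℕ) (S : Finset (Fin n)) :
    Measurable (fun q : (Fin n → ℝ) × (Fin n → ℝ) => merge n S q.1 q.2) := by
  apply measurable_pi_lambda
  intro i
  by_cases h : i ∈ S <;> simp only [merge, h, if_true, if_false]
  · exact (measurable_pi_apply i).comp measurable_fst
  · exact (measurable_pi_apply i).comp measurable_snd

lemma prodPart_le (n : ℕ) (P : Measure (Fin n → ℝ)) (S : Finset (Fin n)) :
    prodPart n P S ≤ ((2:ℝ≥0∞) ^ n) • tildeP n P := by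
  have h2 : ((2:ℝ≥0∞) ^ n) • tildeP n P = ∑ T : Finset (Fin n), prodPart n P T := by
    rw [tildeP, smul_smul, ENNReal.mul_inv_cancel (by positivity) (by simp), one_smul]
  rw [h2, Measure.le_iff']
  intro s
  rw [Measure.finset_sum_apply]
  exact Finset.single_le_sum (f := fun T => prodPart n P T s) (fun _ _ => zero_le)
    (mem_univ S)

lemma prodPart_ac (n : ℕ) (P : Measure (Fin n → ℝ)) (S : Finset (Fin n)) :
    prodPart n P S ≪ tildeP n P :=
  (Measure.absolutelyContinuous_of_le (prodPart_le n P S)).trans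
    (Measure.absolutelyContinuous_of_le_smul le_rfl)

/-- The variance of the empirical mean of `h` over `K` i.i.d. samples is `Var h / K`. -/
lemma empmean (n : ℕ) (P : Measure (Fin n → ℝ)) [IsProbabilityMeasure P]
    {Ω : Type} [MeasurableSpace Ω] (Pr : Measure Ω) [IsProbabilityMeasure Pr]
    (K : ℕ) (hK : 0 < K) (X : Fin K → Ω → (Fin n → ℝ))
    (hXmeas : ∀ k, Measurable (X k))
    (hlaw : ∀ k, Measure.map (X k) Pr = P)
    (hindep : iIndepFun X Pr)
    (h : (Fin n → ℝ) → ℝ) (hhm : Measurable h) (hhL : MemLp h 2 P) :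
    ∫ ω, ((∫ x, h x ∂P) - (K:ℝ)⁻¹ * ∑ k, h (X k ω)) ^ 2 ∂Pr
      = variance h P / K := by
  set c : ℝ := ∫ x, h x ∂P with hc
  set Z : Fin K → Ω → ℝ := fun k ω => h (X k ω) with hZ
  have hZm : ∀ k, Measurable (Z k) := fun k => hhm.comp (hXmeas k)
  have hZL : ∀ k, MemLp (Z k) 2 Pr := by
    intro k
    have := (memLp_map_measure_iff (g := h) (f := X k) (p := 2) (μ := Pr)
      (by rw [hlaw k]; exact hhm.aestronglyMeasurable) (hXmeas k).aemeasurable).mp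
    exact this (by rw [hlaw k]; exact hhL)
  have hZint : ∀ k, ∫ ω, Z k ω ∂Pr = c := by
    intro k
    rw [hZ, hc, ← hlaw k, integral_map (hXmeas k).aemeasurable]
    · exact (by rw [hlaw k]; exact hhm.aestronglyMeasurable)
  have hvarZ : ∀ k, variance (Z k) Pr = variance h P := by
    intro k
    rw [variance_eq_sub (hZL k), variance_eq_sub hhL, hZint k]
    congr 1
    rw [← hlaw k, integral_map (hXmeas k).aemeasurable
      (by rw [hlaw k]; exact (hhm.pow_const 2).aestronglyMeasurable)]
    simp [hZ]
  set Y : Ω → ℝ := fun ω => (K:ℝ)⁻¹ * ∑ k, Z k ω with hYdef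
  have hYsmul : Y = (K:ℝ)⁻¹ • (∑ k, Z k) := by
    funext ω; simp [hYdef, Finset.sum_apply]
  have hYL : MemLp Y 2 Pr := by
    rw [hYsmul]
    exact (memLp_finset_sum' _ (fun k _ => hZL k)).const_smul _
  have hEY : ∫ ω, Y ω ∂Pr = c := by
    rw [hYdef]
    simp only
    rw [integral_const_mul, integral_finset_sum _ (fun k _ => (hZL k).integrable one_le_two)]
    simp only [hZint]
    rw [Finset.sum_const, card_univ, Fintype.card_fin, nsmul_eq_mul]
    field_simp
  have hvarY : variance Y Pr = variance h P / K := by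
    rw [hYsmul, variance_smul,
      IndepFun.variance_sum (fun k _ => hZL k)
        (fun k _ l _ hkl => (hindep.comp (fun _ => h) (fun _ => hhm)).indepFun hkl)]
    simp only [hvarZ]
    rw [Finset.sum_const, card_univ, Fintype.card_fin, nsmul_eq_mul]
    have hK0 : (K:ℝ) ≠ 0 := Nat.cast_ne_zero.mpr hK.ne'
    field_simp
  have : ∫ ω, (c - Y ω) ^ 2 ∂Pr = variance Y Pr := by
    rw [variance_eq_integral hYL.1.aemeasurable, hEY]
    apply integral_congr_ae
    filter_upwards with ω
    ring
  rw [← hvarY, ← this]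

lemma var_sub_le {α : Type*} [MeasurableSpace α] (P : Measure α) [IsProbabilityMeasure P]
    (a b : α → ℝ) (hA : MemLp a 2 P) (hB : MemLp b 2 P) :
    variance (fun x => a x - b x) P
      ≤ 2 * (∫ x, (a x - ∫ y, a y ∂P) ^ 2 ∂P) + 2 * (∫ x, (b x - ∫ y, b y ∂P) ^ 2 ∂P) := by
  have hAB : MemLp (fun x => a x - b x) 2 P := hA.sub hB
  have hEint : ∫ x, (a x - b x) ∂P = (∫ y, a y ∂P) - ∫ y, b y ∂P :=
    integral_sub (hA.integrable one_le_two) (hB.integrable one_le_two)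
  have h1 : variance (fun x => a x - b x) P
      = ∫ x, ((a x - ∫ y, a y ∂P) - (b x - ∫ y, b y ∂P)) ^ 2 ∂P := by
    rw [variance_eq_integral hAB.1.aemeasurable]
    apply integral_congr_ae
    filter_upwards with x
    simp only [Pi.pow_apply, Pi.sub_apply, hEint]
    ring
  have hIA : Integrable (fun x => (a x - ∫ y, a y ∂P) ^ 2) P := by
    have := (hA.sub (memLp_const (∫ y, a y ∂P))).integrable_sq
    exact this.congr (ae_of_all _ fun x => by simp [Pi.sub_apply])
  have hIB : Integrable (fun x => (b x - ∫ y, b y ∂P) ^ 2) P := by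
    have := (hB.sub (memLp_const (∫ y, b y ∂P))).integrable_sq
    exact this.congr (ae_of_all _ fun x => by simp [Pi.sub_apply])
  have hI1 : Integrable (fun x => ((a x - ∫ y, a y ∂P) - (b x - ∫ y, b y ∂P)) ^ 2) P := by
    have := (hAB.sub (memLp_const ((∫ y, a y ∂P) - ∫ y, b y ∂P))).integrable_sq
    exact this.congr (ae_of_all _ fun x => by simp only [Pi.sub_apply]; ring)
  rw [h1, ← integral_const_mul, ← integral_const_mul,
    ← integral_add (hIA.const_mul 2) (hIB.const_mul 2)]
  apply integral_mono hI1 ((hIA.const_mul 2).add (hIB.const_mul 2))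
  intro x
  simp only [Pi.add_apply]
  nlinarith [sq_nonneg ((a x - ∫ y, a y ∂P) + (b x - ∫ y, b y ∂P))]

lemma comb (n : ℕ) (i : Fin n) (V : Finset (Fin n) → ℝ) (hV : ∀ T, 0 ≤ V T) :
    ∑ S ∈ (univ.erase i).powerset, (V (insert i S) + V S)
      ≤ ∑ T : Finset (Fin n), V T := by
  rw [Finset.sum_add_distrib]
  have hni : ∀ S ∈ (univ.erase i).powerset, i ∉ S := by
    intro S hS
    intro hiS
    exact (Finset.mem_erase.mp ((Finset.mem_powerset.mp hS) hiS)).1 rfl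
  have hinj : ∀ S ∈ (univ.erase i).powerset, ∀ S' ∈ (univ.erase i).powerset,
      insert i S = insert i S' → S = S' := by
    intro S hS S' hS' hEq
    have := congrArg (fun T => Finset.erase T i) hEq
    simpa [Finset.erase_insert (hni S hS), Finset.erase_insert (hni S' hS')] using this
  have h1 : ∑ S ∈ (univ.erase i).powerset, V (insert i S)
      = ∑ T ∈ (univ.erase i).powerset.image (insert i), V T :=
    (Finset.sum_image hinj).symm
  have hdisj : Disjoint ((univ.erase i).powerset.image (insert i))
      (univ.erase i).powerset := by
    rw [Finset.disjoint_left]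
    intro T hT hT'
    obtain ⟨S, hS, rfl⟩ := Finset.mem_image.mp hT
    exact hni _ hT' (Finset.mem_insert_self i S)
  rw [h1, ← Finset.sum_union hdisj]
  exact Finset.sum_le_sum_of_subset_of_nonneg (Finset.subset_univ _)
    (fun T _ _ => hV T)

/-- Core estimate, for a measurable family `g` of `L²(P)` functions. -/
lemma core (n : ℕ) (P : Measure (Fin n → ℝ)) [IsProbabilityMeasure P]
    {Ω : Type} [MeasurableSpace Ω] (Pr : Measure Ω) [IsProbabilityMeasure Pr]
    (K : ℕ) (hK : 0 < K) (X : Fin K → Ω → (Fin n → ℝ))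
    (hXmeas : ∀ k, Measurable (X k))
    (hlaw : ∀ k, Measure.map (X k) Pr = P)
    (hindep : iIndepFun X Pr)
    (g : Finset (Fin n) → (Fin n → ℝ) → ℝ) (hgm : ∀ S, Measurable (g S))
    (hgL : ∀ S, MemLp (g S) 2 P) (w : Finset (Fin n) → ℝ) (i : Fin n) :
    ∫ ω, (gameValue n w i (fun S => ∫ x, g S x ∂P) -
          gameValue n w i (fun S => (K:ℝ)⁻¹ * ∑ k, g S (X k ω))) ^ 2 ∂Pr
      ≤ (2 / K) * (∑ S ∈ (univ.erase i).powerset, (w S) ^ 2) *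
          (∑ T : Finset (Fin n), ∫ x, (g T x - ∫ y, g T y ∂P) ^ 2 ∂P) := by
  classical
  have hK0 : (0:ℝ) < K := Nat.cast_pos.mpr hK
  set pw := (univ.erase i).powerset with hpw
  set μf : Finset (Fin n) → ℝ := fun S => ∫ x, g S x ∂P with hμf
  set h : Finset (Fin n) → (Fin n → ℝ) → ℝ :=
    fun S x => g (insert i S) x - g S x with hh
  set c : Finset (Fin n) → ℝ := fun S => μf (insert i S) - μf S with hcdef
  set e : Finset (Fin n) → Ω → ℝ :=
    fun S ω => c S - (K:ℝ)⁻¹ * ∑ k, h S (X k ω) with he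
  have hhm : ∀ S, Measurable (h S) := fun S => (hgm _).sub (hgm _)
  have hhL : ∀ S, MemLp (h S) 2 P := fun S => (hgL _).sub (hgL _)
  have hch : ∀ S, ∫ x, h S x ∂P = c S := fun S =>
    integral_sub ((hgL _).integrable one_le_two) ((hgL _).integrable one_le_two)
  have heint : ∀ S, ∫ ω, (e S ω) ^ 2 ∂Pr = variance (h S) P / K := by
    intro S
    have := empmean n P Pr K hK X hXmeas hlaw hindep (h S) (hhm S) (hhL S)
    rw [hch S] at this
    exact this
  have hZL : ∀ S k, MemLp (fun ω => h S (X k ω)) 2 Pr := by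
    intro S k
    exact (memLp_map_measure_iff (g := h S) (f := X k) (p := 2) (μ := Pr)
      (by rw [hlaw k]; exact (hhm S).aestronglyMeasurable)
      (hXmeas k).aemeasurable).mp (by rw [hlaw k]; exact hhL S)
  have heL2 : ∀ S, MemLp (e S) 2 Pr := by
    intro S
    apply (memLp_const (c S)).sub
    have : (fun ω => (K:ℝ)⁻¹ * ∑ k, h S (X k ω))
        = (K:ℝ)⁻¹ • (∑ k : Fin K, fun ω => h S (X k ω)) := by
      funext ω; simp [Finset.sum_apply]
    rw [this]
    exact (memLp_finset_sum' _ (fun k _ => hZL S k)).const_smul _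
  have heI : ∀ S, Integrable (fun ω => (e S ω) ^ 2) Pr := fun S => (heL2 S).integrable_sq
  have herr : ∀ ω, gameValue n w i (fun S => ∫ x, g S x ∂P) -
      gameValue n w i (fun S => (K:ℝ)⁻¹ * ∑ k, g S (X k ω))
      = ∑ S ∈ pw, w S * e S ω := by
    intro ω
    rw [gameValue, gameValue, ← Finset.sum_sub_distrib]
    refine Finset.sum_congr rfl fun S hS => ?_
    have hsplit : (K:ℝ)⁻¹ * ∑ k, h S (X k ω)
        = (K:ℝ)⁻¹ * ∑ k, g (insert i S) (X k ω)
          - (K:ℝ)⁻¹ * ∑ k, g S (X k ω) := by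
      rw [hh]; simp only [Finset.sum_sub_distrib, mul_sub]
    simp only [he, hcdef, hμf, hsplit]
    ring
  calc ∫ ω, (gameValue n w i (fun S => ∫ x, g S x ∂P) -
          gameValue n w i (fun S => (K:ℝ)⁻¹ * ∑ k, g S (X k ω))) ^ 2 ∂Pr
      ≤ ∫ ω, (∑ S ∈ pw, (w S) ^ 2) * ∑ S ∈ pw, (e S ω) ^ 2 ∂Pr := by
        apply integral_mono_of_nonneg (ae_of_all _ fun ω => sq_nonneg _)
          ((integrable_finset_sum pw (fun S _ => heI S)).const_mul _)
        filter_upwards with ω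
        rw [herr ω]
        exact Finset.sum_mul_sq_le_sq_mul_sq pw w (fun S => e S ω)
    _ = (∑ S ∈ pw, (w S) ^ 2) * ∑ S ∈ pw, ∫ ω, (e S ω) ^ 2 ∂Pr := by
        rw [integral_const_mul, integral_finset_sum pw (fun S _ => heI S)]
    _ = (∑ S ∈ pw, (w S) ^ 2) * ∑ S ∈ pw, variance (h S) P / K := by
        simp only [heint]
    _ ≤ (∑ S ∈ pw, (w S) ^ 2) * ∑ S ∈ pw,
          (2 * (∫ x, (g (insert i S) x - μf (insert i S)) ^ 2 ∂P)
           + 2 * (∫ x, (g S x - μf S) ^ 2 ∂P)) / K := by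
        apply mul_le_mul_of_nonneg_left _ (Finset.sum_nonneg fun S _ => sq_nonneg _)
        apply Finset.sum_le_sum
        intro S _
        gcongr
        exact var_sub_le P _ _ (hgL _) (hgL _)
    _ = (∑ S ∈ pw, (w S) ^ 2) * ((2 / K) * ∑ S ∈ pw,
          ((∫ x, (g (insert i S) x - μf (insert i S)) ^ 2 ∂P)
           + (∫ x, (g S x - μf S) ^ 2 ∂P))) := by
        congr 1
        rw [Finset.mul_sum]
        exact Finset.sum_congr rfl fun S _ => by ring
    _ ≤ (2 / K) * (∑ S ∈ pw, (w S) ^ 2) *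
          (∑ T : Finset (Fin n), ∫ x, (g T x - ∫ y, g T y ∂P) ^ 2 ∂P) := by
        have hcomb := comb n i (fun T => ∫ x, (g T x - μf T) ^ 2 ∂P)
          (fun T => integral_nonneg fun x => sq_nonneg _)
        have h2 : (0:ℝ) ≤ 2 / K * ∑ S ∈ pw, w S ^ 2 := by positivity
        have h3 := mul_le_mul_of_nonneg_left hcomb h2
        simp only [hpw] at h3 ⊢
        nlinarith [h3]

/-- Error bound for the empirical marginal game value.
Let `f ∈ L²(P̃_X)` and let `X^(1), …, X^(K)` be i.i.d. samples from `P_X` defined on a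
probability space `(Ω, Pr)`. Then for `P_X`-almost every `x*` and every `i ∈ N`,
`E[ |h_i[N, v^{ME}] − h_i[N, v̂^{ME}]|² ] ≤ (2/K)·(∑_{S⊆N∖{i}} w_i(S,N)²)·(∑_{S⊆N} Var(f(x*_S, X_{-S})))`,
and the right-hand side is finite (each variance integrand is integrable). -/
theorem stmt2 (n : ℕ) (P : Measure (Fin n → ℝ)) [IsProbabilityMeasure P]
    (f : (Fin n → ℝ) → ℝ) (hf : MemLp f 2 (tildeP n P))
    (w : Fin n → Finset (Fin n) → ℝ)
    {Ω : Type} [MeasurableSpace Ω] (Pr : Measure Ω) [IsProbabilityMeasure Pr]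
    (K : ℕ) (hK : 0 < K) (X : Fin K → Ω → (Fin n → ℝ))
    (hXmeas : ∀ k, Measurable (X k))
    (hlaw : ∀ k, Measure.map (X k) Pr = P)
    (hindep : iIndepFun X Pr) :
    ∀ᵐ xs ∂P, ∀ i : Fin n,
      (∀ S : Finset (Fin n),
        Integrable (fun x => (f (merge n S xs x)) ^ 2) P) ∧
      ∫ ω, (gameValue n (w i) i (vME n P f xs) -
            gameValue n (w i) i
              (fun S => (K : ℝ)⁻¹ * ∑ k, f (merge n S xs (X k ω)))) ^ 2 ∂Pr
        ≤ (2 / K) * (∑ S ∈ (univ.erase i).powerset, (w i S) ^ 2) *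
            (∑ S : Finset (Fin n),
              ∫ x, (f (merge n S xs x) - vME n P f xs S) ^ 2 ∂P) := by
  classical
  set f' := hf.1.mk f with hf'def
  have hf'm : StronglyMeasurable f' := hf.1.stronglyMeasurable_mk
  have heq : f =ᵐ[tildeP n P] f' := hf.1.ae_eq_mk
  have hmain : ∀ᵐ xs ∂P, ∀ S : Finset (Fin n),
      (∀ᵐ x ∂P, f (merge n S xs x) = f' (merge n S xs x)) ∧
      MemLp (fun x => f' (merge n S xs x)) 2 P := by
    rw [ae_all_iff]
    intro S
    have hfS : MemLp f' 2 (prodPart n P S) :=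
      MemLp.of_measure_le_smul (by simp) (prodPart_le n P S) (hf.ae_eq heq)
    have hmm := measurable_mergePair n S
    have hfS2 : MemLp (fun q : (Fin n → ℝ) × (Fin n → ℝ) => f' (merge n S q.1 q.2)) 2
        (P.prod P) := by
      have := (memLp_map_measure_iff (f := fun q : (Fin n → ℝ) × (Fin n → ℝ) =>
          merge n S q.1 q.2) (g := f') (p := 2) (μ := P.prod P)
          (hf'm.aestronglyMeasurable) hmm.aemeasurable).mp
      exact this (by rw [← prodPart]; exact hfS)
    have hint : Integrable (fun q : (Fin n → ℝ) × (Fin n → ℝ) =>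
        (f' (merge n S q.1 q.2)) ^ 2) (P.prod P) := hfS2.integrable_sq
    have haeq : ∀ᵐ q ∂(P.prod P), f (merge n S q.1 q.2) = f' (merge n S q.1 q.2) := by
      have h1 : f =ᵐ[prodPart n P S] f' := (prodPart_ac n P S) heq
      exact ae_of_ae_map hmm.aemeasurable h1
    have h1 := Measure.ae_ae_of_ae_prod haeq
    have h2 := hint.prod_right_ae
    filter_upwards [h1, h2] with xs hx1 hx2
    refine ⟨hx1, ?_⟩
    have hmeas : Measurable (fun x => f' (merge n S xs x)) :=
      hf'm.measurable.comp ((measurable_mergePair n S).comp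
        (measurable_const.prodMk measurable_id))
    exact (memLp_two_iff_integrable_sq hmeas.aestronglyMeasurable).mpr hx2
  filter_upwards [hmain] with xs hxs
  intro i
  set g : Finset (Fin n) → (Fin n → ℝ) → ℝ :=
    fun S x => f' (merge n S xs x) with hg
  have hgm : ∀ S, Measurable (g S) := fun S =>
    hf'm.measurable.comp ((measurable_mergePair n S).comp
      (measurable_const.prodMk measurable_id))
  have hgL : ∀ S, MemLp (g S) 2 P := fun S => (hxs S).2
  have hae : ∀ S, ∀ᵐ x ∂P, f (merge n S xs x) = g S x := fun S => (hxs S).1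
  constructor
  · intro S
    exact ((hgL S).integrable_sq).congr (by
      filter_upwards [hae S] with x hx
      rw [hx])
  · have hvME : vME n P f xs = fun S => ∫ x, g S x ∂P := by
      funext S
      exact integral_congr_ae (hae S)
    have hRHS : (∑ S : Finset (Fin n),
        ∫ x, (f (merge n S xs x) - vME n P f xs S) ^ 2 ∂P)
        = ∑ T : Finset (Fin n), ∫ x, (g T x - ∫ y, g T y ∂P) ^ 2 ∂P := by
      apply Finset.sum_congr rfl
      intro T _
      rw [hvME]
      apply integral_congr_ae
      filter_upwards [hae T] with x hx
      rw [hx]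
    have haeω : ∀ᵐ ω ∂Pr, ∀ (S : Finset (Fin n)) (k : Fin K),
        f (merge n S xs (X k ω)) = g S (X k ω) := by
      rw [ae_all_iff]
      intro S
      rw [ae_all_iff]
      intro k
      have h0 := hae S
      rw [← hlaw k] at h0
      exact ae_of_ae_map (hXmeas k).aemeasurable h0
    have hLHS : ∫ ω, (gameValue n (w i) i (vME n P f xs) -
          gameValue n (w i) i
            (fun S => (K : ℝ)⁻¹ * ∑ k, f (merge n S xs (X k ω)))) ^ 2 ∂Pr
        = ∫ ω, (gameValue n (w i) i (fun S => ∫ x, g S x ∂P) -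
            gameValue n (w i) i
              (fun S => (K : ℝ)⁻¹ * ∑ k, g S (X k ω))) ^ 2 ∂Pr := by
      apply integral_congr_ae
      filter_upwards [haeω] with ω hω
      rw [hvME]
      have hfun : (fun S => (K:ℝ)⁻¹ * ∑ k, f (merge n S xs (X k ω)))
          = fun S => (K:ℝ)⁻¹ * ∑ k, g S (X k ω) := by
        funext S
        rw [Finset.sum_congr rfl fun k _ => hω S k]
      rw [hfun]
    rw [hLHS, hRHS]
    exact core n P Pr K hK X hXmeas hlaw hindep g hgm hgL (w i) i
end
end

section
/- Let f belong to (an equivalence class in) L^p(P̃_X) for some p ≥ 1, and let h be a linear game value whose coefficients w_i(S,N) are nonnegative and satisfy Σ_{S⊆N∖{i}} w_i(S,N) = 1. Then for P_X-almost every x* ∈ ℝ^n and every i ∈ N, the map (S,x) ↦ Δ_i(S,x; x*,f) := f(x*_{S∪{i}}, x_{-(S∪{i})}) − f(x*_S, x_{-S}) is measurable with respect to the product measure P_i^{(h)} ⊗ P_X and is p-power integrable with ∫ |Δ_i(S,x; x*,f)|^p [P_i^{(h)} ⊗ P_X](dS, dx) ≤ 2^p · (max_{S⊆N∖{i}} w_i(S,N))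 · ν_{x*}^{(p)}(f), where ν_{x*}^{(p)}(f) := Σ_{S⊆N} ∫ |f(x*_S, x_{-S})|^p P_{X_{-S}}(dx_{-S}). -/
open MeasureTheory ProbabilityTheory ENNReal Filter Finset

noncomputable section

instance {k : ℕ} : MeasurableSingletonClass (Finset (Fin k)) := ⟨fun _ => trivial⟩

lemma measurable_merge (n : ℕ) (S : Finset (Fin n)) :
    Measurable fun q : (Fin n → ℝ) × (Fin n → ℝ) => merge n S q.1 q.2 := by
  refine measurable_pi_lambda _ fun j => ?_
  unfold merge
  by_cases h : j ∈ S <;> simp only [h, if_true, if_false]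
  · exact (measurable_pi_apply j).comp measurable_fst
  · exact (measurable_pi_apply j).comp measurable_snd

lemma abs_sub_rpow_le {p : ℝ} (hp : 0 ≤ p) (a b : ℝ) :
    |a - b| ^ p ≤ 2 ^ p * (|a| ^ p + |b| ^ p) := by
  have h1 : |a - b| ≤ 2 * max |a| |b| := by
    calc |a - b| ≤ |a| + |b| := abs_sub a b
      _ ≤ max |a| |b| + max |a| |b| := add_le_add (le_max_left _ _) (le_max_right _ _)
      _ = 2 * max |a| |b| := (two_mul _).symm
  have h2 := Real.rpow_le_rpow (abs_nonneg _) h1 hp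
  rw [Real.mul_rpow (by norm_num) (le_trans (abs_nonneg a) (le_max_left _ _))] at h2
  refine h2.trans (mul_le_mul_of_nonneg_left ?_ (Real.rpow_nonneg (by norm_num) p))
  rcases max_cases |a| |b| with ⟨h, _⟩ | ⟨h, _⟩ <;> rw [h]
  · exact le_add_of_nonneg_right (Real.rpow_nonneg (abs_nonneg _) p)
  · exact le_add_of_nonneg_left (Real.rpow_nonneg (abs_nonneg _) p)

lemma subsetMeasure_prod (n : ℕ) (P : Measure (Fin n → ℝ)) [IsProbabilityMeasure P]
    (D : Finset (Fin n)) (w : Finset (Fin n) → ℝ) :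
    (subsetMeasure n D w).prod P
      = ∑ T ∈ D.powerset, (ENNReal.ofReal (w T)) • (P.map (fun x => (T, x))) := by
  ext s hs
  rw [Measure.prod_apply hs]
  unfold subsetMeasure
  rw [lintegral_finset_sum_measure]
  simp_rw [lintegral_smul_measure, lintegral_dirac]
  rw [Measure.finset_sum_apply]
  refine Finset.sum_congr rfl fun T hT => ?_
  rw [Measure.smul_apply, Measure.map_apply measurable_prodMk_left hs, smul_eq_mul]

/-- Measurability and `p`-integrability of `Δ_i` w.r.t. `P_i^{(h)} ⊗ P_X`.
Let `f ∈ L^p(P̃_X)` with `p ≥ 1` and let the coefficients `w_i(S,N)` be nonnegative and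
sum to one over `S ⊆ N∖{i}`. Then for `P_X`-almost every `x*` and every `i ∈ N`, the map
`(S,x) ↦ Δ_i(S,x; x*,f) = f(x*_{S∪{i}}, x_{-(S∪{i})}) − f(x*_S, x_{-S})` is measurable
w.r.t. `P_i^{(h)} ⊗ P_X` and `p`-power integrable with
`∫ |Δ_i|^p d(P_i^{(h)} ⊗ P_X) ≤ 2^p · (max_{S⊆N∖{i}} w_i(S,N)) · ν_{x*}^{(p)}(f)`. -/
theorem stmt5 (n : ℕ) (P : Measure (Fin n → ℝ)) [IsProbabilityMeasure P]
    (p : ℝ) (hp : 1 ≤ p) (f : (Fin n → ℝ) → ℝ)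
    (hf : MemLp f (ENNReal.ofReal p) (tildeP n P))
    (w : Fin n → Finset (Fin n) → ℝ)
    (hw0 : ∀ i : Fin n, ∀ S ∈ (univ.erase i).powerset, 0 ≤ w i S)
    (hw1 : ∀ i : Fin n, ∑ S ∈ (univ.erase i).powerset, w i S = 1) :
    ∀ᵐ xs ∂P, ∀ i : Fin n,
      AEMeasurable (deltaFun n f i xs)
        ((subsetMeasure n (univ.erase i) (w i)).prod P) ∧
      Integrable (fun q => |deltaFun n f i xs q| ^ p)
        ((subsetMeasure n (univ.erase i) (w i)).prod P) ∧
      ∫ q, |deltaFun n f i xs q| ^ p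
          ∂((subsetMeasure n (univ.erase i) (w i)).prod P)
        ≤ (2 : ℝ) ^ p *
            ((univ.erase i).powerset.sup' ⟨∅, Finset.empty_mem_powerset _⟩ (w i)) *
            ∑ S : Finset (Fin n), ∫ x, |f (merge n S xs x)| ^ p ∂P := by
  classical
  have hp0 : (0:ℝ) < p := lt_of_lt_of_le one_pos hp
  have hp0' : (0:ℝ) ≤ p := hp0.le
  set pe := ENNReal.ofReal p with hpe
  have hpe0 : pe ≠ 0 := by
    simp only [hpe, Ne, ENNReal.ofReal_eq_zero, not_le]
    exact hp0
  have hpet : pe ≠ ∞ := ENNReal.ofReal_ne_top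
  obtain ⟨f', hf'sm, hff'⟩ := hf.1
  have hf'm : Measurable f' := hf'sm.measurable
  have hf' : MemLp f' pe (tildeP n P) := hf.ae_eq hff'
  have key : ∀ S : Finset (Fin n),
      Integrable (fun q : (Fin n → ℝ) × (Fin n → ℝ) => |f' (merge n S q.1 q.2)| ^ p)
        (P.prod P)
      ∧ ∀ᵐ q : (Fin n → ℝ) × (Fin n → ℝ) ∂(P.prod P),
          f (merge n S q.1 q.2) = f' (merge n S q.1 q.2) := by
    intro S
    have hmS := measurable_merge n S
    have hle : prodPart n P S ≤ ((2:ℝ≥0∞)^n) • tildeP n P := by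
      rw [tildeP, smul_smul,
        ENNReal.mul_inv_cancel (by positivity) (ENNReal.pow_ne_top ENNReal.ofNat_ne_top),
        one_smul]
      calc prodPart n P S
          ≤ prodPart n P S + ∑ S' ∈ univ.erase S, prodPart n P S' :=
            Measure.le_add_right (le_refl _)
        _ = ∑ S' : Finset (Fin n), prodPart n P S' :=
            Finset.add_sum_erase _ _ (Finset.mem_univ S)
    have hfS : MemLp f' pe (prodPart n P S) :=
      (hf'.smul_measure (ENNReal.pow_ne_top ENNReal.ofNat_ne_top)).mono_measure hle
    have hcomp : MemLp (fun q : (Fin n → ℝ) × (Fin n → ℝ) => f' (merge n S q.1 q.2)) pe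
        (P.prod P) := by
      rw [prodPart] at hfS
      exact (memLp_map_measure_iff hf'sm.aestronglyMeasurable hmS.aemeasurable).mp hfS
    constructor
    · have := hcomp.integrable_norm_rpow hpe0 hpet
      simpa [hpe, ENNReal.toReal_ofReal hp0', Real.norm_eq_abs] using this
    · have h1 : f =ᵐ[prodPart n P S] f' := by
        have h2 : f =ᵐ[((2:ℝ≥0∞)^n) • tildeP n P] f' := Measure.ae_smul_measure hff' _
        exact h2.filter_mono (ae_mono hle)
      rw [prodPart] at h1
      exact ae_of_ae_map hmS.aemeasurable h1
  have main : ∀ᵐ xs ∂P, ∀ S : Finset (Fin n),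
      Integrable (fun x => |f' (merge n S xs x)| ^ p) P ∧
      ∀ᵐ x ∂P, f (merge n S xs x) = f' (merge n S xs x) := by
    rw [ae_all_iff]
    intro S
    filter_upwards [(key S).1.prod_right_ae, Measure.ae_ae_of_ae_prod (key S).2]
      with xs h1 h2
    exact ⟨h1, h2⟩
  filter_upwards [main] with xs hxs
  intro i
  have hmerge1 : ∀ S : Finset (Fin n), Measurable fun x => merge n S xs x :=
    fun S => (measurable_merge n S).comp measurable_prodMk_left
  set g : Finset (Fin n) × (Fin n → ℝ) → ℝ :=
    fun q => f' (merge n (insert i q.1) xs q.2) - f' (merge n q.1 xs q.2) with hg_def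
  have hgm : Measurable g := by
    have hsw : Measurable fun q : (Fin n → ℝ) × Finset (Fin n) => g (q.2, q.1) :=
      measurable_from_prod_countable_left fun T =>
        (hf'm.comp (hmerge1 (insert i T))).sub (hf'm.comp (hmerge1 T))
    exact hsw.comp measurable_swap
  have hgabs : Measurable fun q => |g q| ^ p :=
    (Real.continuous_rpow_const hp0').measurable.comp hgm.abs
  have hsec : ∀ T : Finset (Fin n),
      ∀ᵐ x ∂P, deltaFun n f i xs (T, x) = g (T, x) := by
    intro T
    filter_upwards [(hxs (insert i T)).2, (hxs T).2] with x h1 h2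
    simp only [deltaFun, hg_def, h1, h2]
  have Mrep := subsetMeasure_prod n P (univ.erase i) (w i)
  set M := (subsetMeasure n (univ.erase i) (w i)).prod P with hM
  have hae : deltaFun n f i xs =ᵐ[M] g := by
    have hnull : M {q | ¬ deltaFun n f i xs q = g q} = 0 := by
      have hsub : {q | ¬ deltaFun n f i xs q = g q} ⊆
          ⋃ T : Finset (Fin n),
            ({T} : Set (Finset (Fin n))) ×ˢ
              (toMeasurable P {x | ¬ deltaFun n f i xs (T, x) = g (T, x)}) := by
        rintro ⟨T, x⟩ hq
        exact Set.mem_iUnion.2 ⟨T, ⟨rfl, subset_toMeasurable _ _ hq⟩⟩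
      refine measure_mono_null hsub (measure_iUnion_null fun T => ?_)
      have hA : MeasurableSet
          (toMeasurable P {x | ¬ deltaFun n f i xs (T, x) = g (T, x)}) :=
        measurableSet_toMeasurable _ _
      have hA0 : P (toMeasurable P {x | ¬ deltaFun n f i xs (T, x) = g (T, x)}) = 0 := by
        rw [measure_toMeasurable]
        exact ae_iff.mp (hsec T)
      have hms : MeasurableSet
          (({T} : Set (Finset (Fin n))) ×ˢ
            (toMeasurable P {x | ¬ deltaFun n f i xs (T, x) = g (T, x)})) :=
        (MeasurableSet.singleton T).prod hA
      rw [hM] at Mrep ⊢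
      rw [Mrep, Measure.finset_sum_apply]
      refine Finset.sum_eq_zero fun T' _ => ?_
      rw [Measure.smul_apply, Measure.map_apply measurable_prodMk_left hms,
        Set.mk_preimage_prod_right_eq_if]
      split_ifs with hTT
      · rw [hA0, smul_zero]
      · rw [measure_empty, smul_zero]
    exact ae_iff.mpr hnull
  have habs : (fun q => |deltaFun n f i xs q| ^ p) =ᵐ[M] fun q => |g q| ^ p :=
    hae.mono fun q h => by simp only [h]
  have hIT : ∀ T : Finset (Fin n), Integrable (fun x => |g (T, x)| ^ p) P := by
    intro T
    have hbound : Integrable (fun x => 2 ^ p *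
        (|f' (merge n (insert i T) xs x)| ^ p + |f' (merge n T xs x)| ^ p)) P :=
      ((hxs (insert i T)).1.add (hxs T).1).const_mul _
    refine hbound.mono ?_ ?_
    · exact ((Real.continuous_rpow_const hp0').measurable.comp
        (((hf'm.comp (hmerge1 (insert i T))).sub (hf'm.comp (hmerge1 T))).abs)).aestronglyMeasurable
    · refine Eventually.of_forall fun x => ?_
      rw [Real.norm_eq_abs, Real.norm_eq_abs,
        abs_of_nonneg (Real.rpow_nonneg (abs_nonneg _) p)]
      exact (abs_sub_rpow_le hp0' _ _).trans (le_abs_self _)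
  have hITm : ∀ T ∈ (univ.erase i).powerset,
      Integrable (fun q => |g q| ^ p)
        (ENNReal.ofReal (w i T) • (P.map fun x => (T, x))) := by
    intro T _
    refine Integrable.smul_measure ?_ ENNReal.ofReal_ne_top
    rw [integrable_map_measure hgabs.aestronglyMeasurable
      measurable_prodMk_left.aemeasurable]
    exact hIT T
  have hInt_g : Integrable (fun q => |g q| ^ p) M := by
    rw [Mrep]
    exact integrable_finset_sum_measure.2 hITm
  have hInt : Integrable (fun q => |deltaFun n f i xs q| ^ p) M := hInt_g.congr habs.symm
  refine ⟨hgm.aemeasurable.congr hae.symm, hInt, ?_⟩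
  have hint_eq : ∫ q, |deltaFun n f i xs q| ^ p ∂M =
      ∑ T ∈ (univ.erase i).powerset, (w i T) * ∫ x, |g (T, x)| ^ p ∂P := by
    rw [integral_congr_ae habs, Mrep, integral_finset_sum_measure hITm]
    refine Finset.sum_congr rfl fun T hT => ?_
    rw [integral_smul_measure,
      integral_map measurable_prodMk_left.aemeasurable hgabs.aestronglyMeasurable,
      ENNReal.toReal_ofReal (hw0 i T hT), smul_eq_mul]
  set A : Finset (Fin n) → ℝ := fun S => ∫ x, |f' (merge n S xs x)| ^ p ∂P with hA_def
  have hAf : ∀ S : Finset (Fin n), ∫ x, |f (merge n S xs x)| ^ p ∂P = A S := fun S =>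
    integral_congr_ae ((hxs S).2.mono fun x h => by simp only [h])
  have hT_bound : ∀ T : Finset (Fin n),
      ∫ x, |g (T, x)| ^ p ∂P ≤ 2 ^ p * (A (insert i T) + A T) := by
    intro T
    have hbound : Integrable (fun x => 2 ^ p *
        (|f' (merge n (insert i T) xs x)| ^ p + |f' (merge n T xs x)| ^ p)) P :=
      ((hxs (insert i T)).1.add (hxs T).1).const_mul _
    calc ∫ x, |g (T, x)| ^ p ∂P
        ≤ ∫ x, 2 ^ p * (|f' (merge n (insert i T) xs x)| ^ p
            + |f' (merge n T xs x)| ^ p) ∂P :=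
          integral_mono (hIT T) hbound fun x => abs_sub_rpow_le hp0' _ _
      _ = 2 ^ p * (A (insert i T) + A T) := by
          rw [integral_const_mul, integral_add (hxs (insert i T)).1 (hxs T).1]
  set W := ((univ.erase i).powerset.sup' ⟨∅, Finset.empty_mem_powerset _⟩ (w i)) with hW
  have hW0 : 0 ≤ W :=
    le_trans (hw0 i ∅ (Finset.empty_mem_powerset _))
      (Finset.le_sup' _ (Finset.empty_mem_powerset _))
  have hsum : ∑ T ∈ (univ.erase i).powerset, (A (insert i T) + A T)
      = ∑ S : Finset (Fin n), A S := by
    have h1 : (univ : Finset (Fin n)) = insert i (univ.erase i) :=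
      (Finset.insert_erase (Finset.mem_univ i)).symm
    calc ∑ T ∈ (univ.erase i).powerset, (A (insert i T) + A T)
        = ∑ T ∈ (univ.erase i).powerset, A T
            + ∑ T ∈ (univ.erase i).powerset, A (insert i T) := by
          rw [Finset.sum_add_distrib, add_comm]
      _ = ∑ S ∈ (insert i (univ.erase i)).powerset, A S :=
          (Finset.sum_powerset_insert (Finset.notMem_erase i univ) A).symm
      _ = ∑ S : Finset (Fin n), A S := by rw [← h1, Finset.powerset_univ]
  calc ∫ q, |deltaFun n f i xs q| ^ p ∂M
      = ∑ T ∈ (univ.erase i).powerset, (w i T) * ∫ x, |g (T, x)| ^ p ∂P := hint_eq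
    _ ≤ ∑ T ∈ (univ.erase i).powerset, W * (2 ^ p * (A (insert i T) + A T)) := by
        refine Finset.sum_le_sum fun T hT => ?_
        refine mul_le_mul (Finset.le_sup' _ hT) (hT_bound T) ?_ hW0
        exact integral_nonneg fun x => Real.rpow_nonneg (abs_nonneg _) p
    _ = ∑ T ∈ (univ.erase i).powerset, (2 ^ p * W) * (A (insert i T) + A T) :=
        Finset.sum_congr rfl fun T _ => by ring
    _ = 2 ^ p * W * ∑ T ∈ (univ.erase i).powerset, (A (insert i T) + A T) :=
        (Finset.mul_sum _ _ _).symm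
    _ = 2 ^ p * W * ∑ S : Finset (Fin n), A S := by rw [hsum]
    _ = 2 ^ p * W * ∑ S : Finset (Fin n), ∫ x, |f (merge n S xs x)| ^ p ∂P := by
        congr 1
        exact (Finset.sum_congr rfl fun S _ => (hAf S)).symm
end
end

section
/- Let f belong to (an equivalence class in) L^1(P̃_X), let 𝒫 = {S_1,…,S_m} partition N, and let g be a coalitional value of two-coefficient form whose coefficient families are nonnegative and each sum to one. Then for P_X-almost every x* ∈ ℝ^n and every i ∈ S_j, S_j ∈ 𝒫, the marginal coalitional value is well-defined and admits the representation g_i[N, v^{ME}(·; x*, X, f), 𝒫] = ∫ Δ_i(A, T, x; x*, f) [P_j^{(g,𝒫)} ⊗ P_i^{(g,S_j)} ⊗ P_X](dA, dT, dx). -/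
open MeasureTheory ProbabilityTheory ENNReal Filter Finset

noncomputable section

/-- The union `Q_A = ∪_{α ∈ A} S_α` of the groups indexed by `A ⊆ M`. -/
def qUnion (n m : ℕ) (Pt : Fin m → Finset (Fin n)) (A : Finset (Fin m)) :
    Finset (Fin n) :=
  A.biUnion Pt

/-- `Δ_j(A, x; x*, f) = f(x*_{Q_{A∪{j}}}, x_{-Q_{A∪{j}}}) − f(x*_{Q_A}, x_{-Q_A})`
for a partition `Pt = {S_1,…,S_m}` of `N`. -/
def qDelta (n m : ℕ) (Pt : Fin m → Finset (Fin n)) (f : (Fin n → ℝ) → ℝ)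
    (j : Fin m) (xs : Fin n → ℝ) : Finset (Fin m) × (Fin n → ℝ) → ℝ :=
  fun q => f (merge n (qUnion n m Pt (insert j q.1)) xs q.2)
    - f (merge n (qUnion n m Pt q.1) xs q.2)

/-- A coalitional value of two-coefficient form:
`g_i[N, v, 𝒫] = ∑_{A⊆M∖{j}} ∑_{T⊆S_j∖{i}} w¹_j(A,M) w²_i(T,S_j)
  [v(Q_A ∪ T ∪ {i}) − v(Q_A ∪ T)]` for `i ∈ S_j`. -/
def coalVal (n m : ℕ) (Pt : Fin m → Finset (Fin n)) (j : Fin m) (i : Fin n)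
    (w1 : Finset (Fin m) → ℝ) (w2 : Finset (Fin n) → ℝ)
    (v : Finset (Fin n) → ℝ) : ℝ :=
  ∑ A ∈ (univ.erase j).powerset, ∑ T ∈ ((Pt j).erase i).powerset,
    w1 A * w2 T *
      (v (insert i (qUnion n m Pt A ∪ T)) - v (qUnion n m Pt A ∪ T))

/-- `Δ_i(A, T, x; x*, f) = f(x*_{Q_A∪T∪{i}}, x_{-(Q_A∪T∪{i})}) − f(x*_{Q_A∪T}, x_{-(Q_A∪T)})`. -/
def cDelta (n m : ℕ) (Pt : Fin m → Finset (Fin n)) (f : (Fin n → ℝ) → ℝ)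
    (i : Fin n) (xs : Fin n → ℝ) :
    Finset (Fin m) × (Finset (Fin n) × (Fin n → ℝ)) → ℝ :=
  fun q => f (merge n (insert i (qUnion n m Pt q.1 ∪ q.2.1)) xs q.2.2)
    - f (merge n (qUnion n m Pt q.1 ∪ q.2.1) xs q.2.2)

/- ### Auxiliary lemmas -/

instance inst_s13 {k : ℕ} : MeasurableSingletonClass (Finset (Fin k)) :=
  ⟨fun _ => MeasurableSpace.measurableSet_top⟩

instance subsetMeasure_finite {k : ℕ} (D : Finset (Fin k)) (w : Finset (Fin k) → ℝ) :
    IsFiniteMeasure (subsetMeasure k D w) := by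
  constructor
  rw [subsetMeasure, Measure.finset_sum_apply]
  have h1 : ∀ T ∈ D.powerset, ((ENNReal.ofReal (w T)) • Measure.dirac T) Set.univ
      = ENNReal.ofReal (w T) := by intro T _; simp
  rw [Finset.sum_congr rfl h1]
  exact ENNReal.sum_lt_top.mpr (fun T _ => ENNReal.ofReal_lt_top)

lemma meas_disc {k : ℕ} {X γ : Type*} [MeasurableSpace X] [MeasurableSpace γ]
    (h : Finset (Fin k) × X → γ) (hm : ∀ T, Measurable fun x => h (T, x)) :
    Measurable h :=
  (measurable_from_prod_countable_left (f := fun p : X × Finset (Fin k) => h p.swap) hm).comp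
    measurable_swap

lemma subsetMeasure_prod_s13 {k : ℕ} {Y : Type*} [MeasurableSpace Y] (D : Finset (Fin k))
    (w : Finset (Fin k) → ℝ) (ν : Measure Y) [SFinite ν] :
    (subsetMeasure k D w).prod ν
      = ∑ T ∈ D.powerset, (ENNReal.ofReal (w T)) • ν.map (Prod.mk T) := by
  ext s hs
  rw [Measure.prod_apply hs, subsetMeasure]
  rw [lintegral_finset_sum_measure]
  rw [Measure.finset_sum_apply]
  refine Finset.sum_congr rfl fun T _ => ?_
  rw [lintegral_smul_measure, lintegral_dirac, Measure.smul_apply,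
    Measure.map_apply measurable_prodMk_left hs, smul_eq_mul]

lemma integral_wprod {k : ℕ} {Y : Type*} [MeasurableSpace Y] (D : Finset (Fin k))
    (w : Finset (Fin k) → ℝ) (hw : ∀ T ∈ D.powerset, 0 ≤ w T) (ν : Measure Y) [SFinite ν]
    (h : Finset (Fin k) × Y → ℝ) (hm : Measurable h)
    (hint : ∀ T, Integrable (fun y => h (T, y)) ν) :
    ∫ q, h q ∂((subsetMeasure k D w).prod ν)
      = ∑ T ∈ D.powerset, w T * ∫ y, h (T, y) ∂ν := by
  have hmm : ∀ T : Finset (Fin k), Integrable h (ν.map (Prod.mk T)) := fun T =>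
    (integrable_map_measure (hm.aestronglyMeasurable)
      measurable_prodMk_left.aemeasurable).mpr (hint T)
  rw [subsetMeasure_prod_s13,
    integral_finset_sum_measure (fun T hT => (hmm T).smul_measure ofReal_ne_top)]
  refine Finset.sum_congr rfl fun T hT => ?_
  rw [integral_smul_measure,
    integral_map measurable_prodMk_left.aemeasurable hm.aestronglyMeasurable,
    ENNReal.toReal_ofReal (hw T hT), smul_eq_mul]

lemma integrable_wprod {k : ℕ} {Y : Type*} [MeasurableSpace Y] (D : Finset (Fin k))
    (w : Finset (Fin k) → ℝ) (ν : Measure Y) [SFinite ν]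
    (h : Finset (Fin k) × Y → ℝ) (hm : Measurable h)
    (hint : ∀ T, Integrable (fun y => h (T, y)) ν) :
    Integrable h ((subsetMeasure k D w).prod ν) := by
  rw [subsetMeasure_prod_s13]
  exact integrable_finset_sum_measure.mpr fun T _ =>
    ((integrable_map_measure hm.aestronglyMeasurable
      measurable_prodMk_left.aemeasurable).mpr (hint T)).smul_measure ofReal_ne_top

lemma subsetMeasure_prob {k : ℕ} (D : Finset (Fin k)) (w : Finset (Fin k) → ℝ)
    (hw0 : ∀ T ∈ D.powerset, 0 ≤ w T) (hw1 : ∑ T ∈ D.powerset, w T = 1) :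
    IsProbabilityMeasure (subsetMeasure k D w) := by
  constructor
  rw [subsetMeasure, Measure.finset_sum_apply]
  have : ∀ T ∈ D.powerset, ((ENNReal.ofReal (w T)) • Measure.dirac T) Set.univ
      = ENNReal.ofReal (w T) := by
    intro T _; simp
  rw [Finset.sum_congr rfl this, ← ENNReal.ofReal_sum_of_nonneg hw0, hw1, ofReal_one]

/-- Integral representation of the marginal coalitional value.
Let `f ∈ L¹(P̃_X)`, let `𝒫 = {S_1,…,S_m}` partition `N`, and let the coefficient
families be nonnegative and each sum to one. Then for `P_X`-almost every `x*` and every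
`i ∈ S_j`, `S_j ∈ 𝒫`, the marginal coalitional value is well-defined and
`g_i[N, v^{ME}(·; x*, X, f), 𝒫] = ∫ Δ_i(A, T, x; x*, f)
  [P_j^{(g,𝒫)} ⊗ P_i^{(g,S_j)} ⊗ P_X](dA, dT, dx)`. -/
theorem stmt13 (n m : ℕ) (P : Measure (Fin n → ℝ)) [IsProbabilityMeasure P]
    (f : (Fin n → ℝ) → ℝ) (hf : MemLp f 1 (tildeP n P))
    (Pt : Fin m → Finset (Fin n))
    (hPtne : ∀ j, (Pt j).Nonempty)
    (hPtdisj : ∀ j k, j ≠ k → Disjoint (Pt j) (Pt k))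
    (hPtcover : Finset.univ.biUnion Pt = (Finset.univ : Finset (Fin n)))
    (j : Fin m) (i : Fin n) (hi : i ∈ Pt j)
    (w1 : Finset (Fin m) → ℝ) (w2 : Finset (Fin n) → ℝ)
    (hw10 : ∀ A ∈ (univ.erase j).powerset, 0 ≤ w1 A)
    (hw11 : ∑ A ∈ (univ.erase j).powerset, w1 A = 1)
    (hw20 : ∀ T ∈ ((Pt j).erase i).powerset, 0 ≤ w2 T)
    (hw21 : ∑ T ∈ ((Pt j).erase i).powerset, w2 T = 1) :
    ∀ᵐ xs ∂P,
      (∀ S : Finset (Fin n), Integrable (fun x => f (merge n S xs x)) P) ∧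
      coalVal n m Pt j i w1 w2 (vME n P f xs) =
        ∫ q, cDelta n m Pt f i xs q
          ∂((subsetMeasure m (univ.erase j) w1).prod
              ((subsetMeasure n ((Pt j).erase i) w2).prod P)) := by
  classical
  set g : (Fin n → ℝ) → ℝ := hf.1.mk f with hgdef
  have hg : StronglyMeasurable g := hf.1.stronglyMeasurable_mk
  have hfg : f =ᵐ[tildeP n P] g := hf.1.ae_eq_mk
  have hfi : Integrable f (tildeP n P) := memLp_one_iff_integrable.mp hf
  have hmX : ∀ (S : Finset (Fin n)) (xs : Fin n → ℝ),
      Measurable (fun x => merge n S xs x) := by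
    intro S xs
    apply measurable_pi_lambda
    intro a
    by_cases h : a ∈ S
    · simpa [merge, h] using (measurable_const : Measurable fun _ : Fin n → ℝ => xs a)
    · simpa [merge, h] using measurable_pi_apply a
  have hmQ : ∀ S : Finset (Fin n),
      Measurable (fun q : (Fin n → ℝ) × (Fin n → ℝ) => merge n S q.1 q.2) := by
    intro S
    apply measurable_pi_lambda
    intro a
    by_cases h : a ∈ S
    · simpa [merge, h, Function.comp_def] using (measurable_pi_apply a).comp measurable_fst
    · simpa [merge, h, Function.comp_def] using (measurable_pi_apply a).comp measurable_snd
  have hle : ∀ S : Finset (Fin n), prodPart n P S ≤ ((2 : ℝ≥0∞) ^ n) • tildeP n P := by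
    intro S
    rw [tildeP, smul_smul, ENNReal.mul_inv_cancel (by simp) (by simp), one_smul]
    refine Measure.le_iff.mpr fun s hs => ?_
    rw [Measure.finset_sum_apply]
    exact Finset.single_le_sum (f := fun T => prodPart n P T s) (fun T _ => zero_le)
      (Finset.mem_univ S)
  have hKey : ∀ S : Finset (Fin n),
      (∀ᵐ xs ∂P, Integrable (fun x => g (merge n S xs x)) P) ∧
      (∀ᵐ xs ∂P, ∀ᵐ x ∂P, f (merge n S xs x) = g (merge n S xs x)) := by
    intro S
    have hfgS : f =ᵐ[prodPart n P S] g :=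
      (Measure.absolutelyContinuous_of_le_smul (hle S)).ae_eq hfg
    have hfS : Integrable f (prodPart n P S) :=
      (hfi.smul_measure (by simp : ((2 : ℝ≥0∞) ^ n) ≠ ⊤)).mono_measure (hle S)
    have hgS : Integrable g ((P.prod P).map (fun q => merge n S q.1 q.2)) :=
      hfS.congr hfgS
    have hq : Integrable (fun q : (Fin n → ℝ) × (Fin n → ℝ) => g (merge n S q.1 q.2))
        (P.prod P) :=
      (integrable_map_measure hg.aestronglyMeasurable (hmQ S).aemeasurable).mp hgS
    have haeq : ∀ᵐ q : (Fin n → ℝ) × (Fin n → ℝ) ∂(P.prod P),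
        f (merge n S q.1 q.2) = g (merge n S q.1 q.2) :=
      ae_of_ae_map (hmQ S).aemeasurable hfgS
    exact ⟨hq.prod_right_ae, Measure.ae_ae_of_ae_prod haeq⟩
  have hgood : ∀ᵐ xs ∂P, ∀ S : Finset (Fin n),
      Integrable (fun x => g (merge n S xs x)) P ∧
      ∀ᵐ x ∂P, f (merge n S xs x) = g (merge n S xs x) :=
    ae_all_iff.mpr fun S => ((hKey S).1.and (hKey S).2)
  filter_upwards [hgood] with xs hxs
  have hIg : ∀ S, Integrable (fun x => g (merge n S xs x)) P := fun S => (hxs S).1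
  have hEq : ∀ S, (fun x => f (merge n S xs x)) =ᵐ[P] (fun x => g (merge n S xs x)) :=
    fun S => (hxs S).2
  have hIf : ∀ S, Integrable (fun x => f (merge n S xs x)) P :=
    fun S => (hIg S).congr (hEq S).symm
  refine ⟨hIf, ?_⟩
  have hv : vME n P f xs = vME n P g xs := funext fun S => integral_congr_ae (hEq S)
  haveI : IsProbabilityMeasure (subsetMeasure m (univ.erase j) w1) :=
    subsetMeasure_prob _ _ hw10 hw11
  haveI : IsProbabilityMeasure (subsetMeasure n ((Pt j).erase i) w2) :=
    subsetMeasure_prob _ _ hw20 hw21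
  -- a measurable null superset of the set where f and g differ (for all S)
  obtain ⟨N, hNm, hN0, hNx⟩ : ∃ N : Set (Fin n → ℝ), MeasurableSet N ∧ P N = 0 ∧
      ∀ x ∉ N, ∀ S, f (merge n S xs x) = g (merge n S xs x) := by
    refine ⟨⋃ S : Finset (Fin n), toMeasurable P {x | ¬ f (merge n S xs x) = g (merge n S xs x)},
      MeasurableSet.iUnion fun S => measurableSet_toMeasurable _ _,
      measure_iUnion_null fun S => by
        rw [measure_toMeasurable]; exact ae_iff.mp (hEq S), ?_⟩
    intro x hx S
    by_contra hc
    exact hx (Set.mem_iUnion.mpr ⟨S, subset_toMeasurable _ _ hc⟩)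
  have hρN : ((subsetMeasure m (univ.erase j) w1).prod
      ((subsetMeasure n ((Pt j).erase i) w2).prod P))
      {q : Finset (Fin m) × (Finset (Fin n) × (Fin n → ℝ)) | q.2.2 ∈ N} = 0 := by
    have h1 : ((subsetMeasure m (univ.erase j) w1).prod
        ((subsetMeasure n ((Pt j).erase i) w2).prod P)).map Prod.snd
        = (subsetMeasure n ((Pt j).erase i) w2).prod P := by
      rw [Measure.map_snd_prod, measure_univ, one_smul]
    have h2 : ((subsetMeasure n ((Pt j).erase i) w2).prod P).map Prod.snd = P := by
      rw [Measure.map_snd_prod, measure_univ, one_smul]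
    have hset : {q : Finset (Fin m) × (Finset (Fin n) × (Fin n → ℝ)) | q.2.2 ∈ N}
        = Prod.snd ⁻¹' (Prod.snd ⁻¹' N) := rfl
    rw [hset, ← Measure.map_apply measurable_snd (measurable_snd hNm), h1,
      ← Measure.map_apply measurable_snd hNm, h2]
    exact hN0
  have hcd : ∀ᵐ q ∂((subsetMeasure m (univ.erase j) w1).prod
      ((subsetMeasure n ((Pt j).erase i) w2).prod P)),
      cDelta n m Pt f i xs q = cDelta n m Pt g i xs q := by
    rw [ae_iff]
    refine measure_mono_null (fun q hq => ?_) hρN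
    simp only [Set.mem_setOf_eq] at hq ⊢
    by_contra hx
    exact hq (by simp [cDelta, hNx q.2.2 hx])
  have hmc : Measurable (cDelta n m Pt g i xs) := by
    apply meas_disc
    intro A
    apply meas_disc
    intro T
    simp only [cDelta]
    exact (hg.measurable.comp (hmX _ xs)).sub (hg.measurable.comp (hmX _ xs))
  have hint : ∀ (A : Finset (Fin m)) (T : Finset (Fin n)),
      Integrable (fun x => cDelta n m Pt g i xs (A, (T, x))) P := fun A T => by
    simp only [cDelta]
    exact (hIg _).sub (hIg _)
  have key : ∫ q, cDelta n m Pt g i xs q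
      ∂((subsetMeasure m (univ.erase j) w1).prod
          ((subsetMeasure n ((Pt j).erase i) w2).prod P))
      = ∑ A ∈ (univ.erase j).powerset, w1 A *
          ∑ T ∈ ((Pt j).erase i).powerset, w2 T *
            (vME n P g xs (insert i (qUnion n m Pt A ∪ T))
              - vME n P g xs (qUnion n m Pt A ∪ T)) := by
    rw [integral_wprod _ _ hw10 _ _ hmc (fun A =>
      integrable_wprod _ _ _ _ (hmc.comp measurable_prodMk_left) (fun T => hint A T))]
    refine Finset.sum_congr rfl fun A hA => ?_
    congr 1
    rw [integral_wprod _ _ hw20 _ (fun y => cDelta n m Pt g i xs (A, y))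
      (hmc.comp measurable_prodMk_left) (fun T => hint A T)]
    refine Finset.sum_congr rfl fun T hT => ?_
    congr 1
    simp only [cDelta, vME]
    rw [integral_sub (hIg _) (hIg _)]
  rw [hv, integral_congr_ae hcd, key]
  simp only [coalVal, Finset.mul_sum, mul_assoc]
end
end
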